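/- Let x ~ N(0, I_p) and M a fixed p×p matrix. Then E[‖x‖₂⁴ · (x^T M x)^2] = (p+4)(p+6)·[(tr M)^2 + tr(M M) + tr(M^T M)]. -/

import Mathlib

open MeasureTheory ProbabilityTheory Matrix
open Real Filter
open scoped NNReal ENNReal

noncomputable section

-- key bound
lemma gbound (n : ℕ) (x : ℝ) : |x ^ n * Real.exp (-x^2/2)| ≤ Real.exp ((n:ℝ)^2) * Real.exp (-x^2/4) := by
  rw [abs_mul, abs_pow, Real.abs_exp, ← Real.exp_add]
  have h1 : |x| ^ n ≤ Real.exp ((n:ℝ) * |x|) := by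
    calc |x| ^ n ≤ Real.exp |x| ^ n := by
          exact pow_le_pow_left₀ (abs_nonneg x) (by linarith [Real.add_one_le_exp |x|]) n
      _ = Real.exp ((n:ℝ) * |x|) := by rw [← Real.exp_nat_mul]
  calc |x| ^ n * Real.exp (-x^2/2) ≤ Real.exp ((n:ℝ)*|x|) * Real.exp (-x^2/2) := by
        apply mul_le_mul_of_nonneg_right h1 (Real.exp_nonneg _)
    _ = Real.exp ((n:ℝ)*|x| + -x^2/2) := by rw [← Real.exp_add]
    _ ≤ Real.exp ((n:ℝ)^2 + -x^2/4) := by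
        apply Real.exp_le_exp.2
        nlinarith [sq_nonneg ((n:ℝ) - |x|/2), sq_abs x, abs_nonneg x]

lemma gint (n : ℕ) : Integrable (fun x : ℝ => x ^ n * Real.exp (-x^2/2)) := by
  apply Integrable.mono ((integrable_exp_neg_mul_sq (by norm_num : (0:ℝ) < 1/4)).const_mul (Real.exp ((n:ℝ)^2)))
  · exact (continuous_pow n).mul (by continuity) |>.aestronglyMeasurable
  · refine Filter.Eventually.of_forall fun x => ?_
    have := gbound n x
    rw [Real.norm_eq_abs, Real.norm_eq_abs]
    calc |x ^ n * Real.exp (-x^2/2)| ≤ Real.exp ((n:ℝ)^2) * Real.exp (-x^2/4) := this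
      _ ≤ |Real.exp ((n:ℝ)^2) * Real.exp (-(1/4) * x^2)| := by
          rw [abs_mul, Real.abs_exp, Real.abs_exp]
          apply le_of_eq; ring_nf

def gI (n : ℕ) : ℝ := ∫ x : ℝ, x ^ n * Real.exp (-x^2/2)

lemma gtend_aux (n : ℕ) {l : Filter ℝ} (h : Tendsto (fun x : ℝ => x^2) l atTop) :
    Tendsto (fun x : ℝ => x ^ n * Real.exp (-x^2/2)) l (nhds 0) := by
  apply squeeze_zero_norm (fun x => gbound n x)
  rw [show (0:ℝ) = Real.exp ((n:ℝ)^2) * 0 by ring]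
  apply Tendsto.const_mul
  apply Real.tendsto_exp_atBot.comp
  have h4 : Tendsto (fun x : ℝ => x^2/4) l atTop := h.atTop_div_const (by norm_num)
  have := tendsto_neg_atTop_atBot.comp h4
  convert this using 2 with x
  simp [Function.comp]
  ring

lemma gtend_top (n : ℕ) : Tendsto (fun x : ℝ => x ^ n * Real.exp (-x^2/2)) atTop (nhds 0) :=
  gtend_aux n (tendsto_pow_atTop two_ne_zero)

lemma gtend_bot (n : ℕ) : Tendsto (fun x : ℝ => x ^ n * Real.exp (-x^2/2)) atBot (nhds 0) := by
  apply gtend_aux n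
  rw [show (fun x:ℝ => x^2) = (fun x:ℝ => (-x)^2) by funext x; ring]
  exact (tendsto_pow_atTop two_ne_zero).comp tendsto_neg_atBot_atTop

lemma gI_rec (n : ℕ) : gI (n + 2) = (n + 1 : ℝ) * gI n := by
  have hderiv : ∀ x : ℝ, HasDerivAt (fun x : ℝ => x ^ (n+1) * Real.exp (-x^2/2))
      ((n+1:ℝ) * x ^ n * Real.exp (-x^2/2) - x ^ (n+2) * Real.exp (-x^2/2)) x := by
    intro x
    have h1 : HasDerivAt (fun x : ℝ => -x^2/2) (-x) x := by
      have := ((hasDerivAt_pow 2 x).neg).div_const 2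
      simpa using this.congr_deriv (by ring)
    have h2 := h1.exp
    have h3 := (hasDerivAt_pow (n+1) x).fun_mul h2
    refine h3.congr_deriv ?_
    push_cast
    ring
  have hint : Integrable (fun x : ℝ => (n+1:ℝ) * x ^ n * Real.exp (-x^2/2) - x ^ (n+2) * Real.exp (-x^2/2)) := by
    have := ((gint n).const_mul (n+1:ℝ)).sub (gint (n+2))
    simpa [mul_assoc, Pi.sub_def] using this
  have h0 := integral_of_hasDerivAt_of_tendsto hderiv hint (gtend_bot (n+1)) (gtend_top (n+1))
  rw [sub_zero] at h0
  have h1 : ∫ x : ℝ, ((n+1:ℝ) * x ^ n * Real.exp (-x^2/2) - x ^ (n+2) * Real.exp (-x^2/2))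
      = (n+1:ℝ) * gI n - gI (n+2) := by
    rw [integral_sub (by simpa [mul_assoc] using (gint n).const_mul (n+1:ℝ)) (gint (n+2))]
    simp only [gI, mul_assoc, integral_const_mul]
  rw [h1] at h0
  linarith

lemma gI_zero : gI 0 = Real.sqrt (2 * Real.pi) := by
  have := integral_gaussian (1/2)
  simp only [gI, pow_zero, one_mul]
  rw [show (fun x : ℝ => Real.exp (-x^2/2)) = fun x : ℝ => Real.exp (-(1/2) * x^2) by funext x; ring_nf]
  rw [this]
  rw [div_div_eq_mul_div, div_one]
  ring_nf

def gm (n : ℕ) : ℝ := ∫ x : ℝ, x ^ n ∂(gaussianReal 0 1)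

lemma gauss_eq : gaussianReal 0 1 = MeasureTheory.Measure.withDensity volume
    (fun x => ((Real.toNNReal (gaussianPDFReal 0 1 x) : ℝ≥0) : ℝ≥0∞)) := by
  rw [gaussianReal_of_var_ne_zero 0 one_ne_zero]
  rfl

lemma pdf_eq (x : ℝ) : gaussianPDFReal 0 1 x = (Real.sqrt (2 * Real.pi))⁻¹ * Real.exp (-x^2/2) := by
  simp [gaussianPDFReal]

lemma gm_eq (n : ℕ) : gm n = (Real.sqrt (2 * Real.pi))⁻¹ * gI n := by
  rw [gm, gauss_eq, integral_withDensity_eq_integral_smul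
      ((measurable_gaussianPDFReal 0 1).real_toNNReal) (fun x => x ^ n)]
  simp only [NNReal.smul_def, coe_toNNReal', NNReal.coe_mk]
  have : ∀ x : ℝ, (max (gaussianPDFReal 0 1 x) 0) • x ^ n
      = (Real.sqrt (2 * Real.pi))⁻¹ * (x ^ n * Real.exp (-x^2/2)) := by
    intro x
    rw [max_eq_left (gaussianPDFReal_nonneg 0 1 x), pdf_eq, smul_eq_mul]
    ring
  rw [show (fun x : ℝ => (max (gaussianPDFReal 0 1 x) 0) • x ^ n)
      = fun x : ℝ => (Real.sqrt (2 * Real.pi))⁻¹ * (x ^ n * Real.exp (-x^2/2)) from funext this]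
  rw [integral_const_mul]
  rfl

lemma gm_integrable (n : ℕ) : Integrable (fun x : ℝ => x ^ n) (gaussianReal 0 1) := by
  rw [gauss_eq]
  rw [integrable_withDensity_iff_integrable_smul ((measurable_gaussianPDFReal 0 1).real_toNNReal)]
  have : ∀ x : ℝ, ((Real.toNNReal (gaussianPDFReal 0 1 x) : ℝ≥0)) • x ^ n
      = (Real.sqrt (2 * Real.pi))⁻¹ * (x ^ n * Real.exp (-x^2/2)) := by
    intro x
    simp only [NNReal.smul_def, coe_toNNReal', NNReal.coe_mk]
    rw [max_eq_left (gaussianPDFReal_nonneg 0 1 x), pdf_eq, smul_eq_mul]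
    ring
  rw [show (fun x : ℝ => ((Real.toNNReal (gaussianPDFReal 0 1 x) : ℝ≥0)) • x ^ n)
      = fun x : ℝ => (Real.sqrt (2 * Real.pi))⁻¹ * (x ^ n * Real.exp (-x^2/2)) from funext this]
  exact (gint n).const_mul _

lemma sqrt2pi_pos : (0:ℝ) < Real.sqrt (2 * Real.pi) :=
  Real.sqrt_pos.2 (by positivity)

lemma gm_zero : gm 0 = 1 := by
  rw [gm_eq, ← gI_zero]
  exact inv_mul_cancel₀ (ne_of_gt (gI_zero ▸ sqrt2pi_pos))

lemma gm_rec (n : ℕ) : gm (n + 2) = (n + 1 : ℝ) * gm n := by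
  rw [gm_eq, gm_eq, gI_rec]; ring

lemma gm_two : gm 2 = 1 := by rw [show 2 = 0 + 2 from rfl, gm_rec, gm_zero]; norm_num
lemma gm_four : gm 4 = 3 := by rw [show 4 = 2 + 2 from rfl, gm_rec, gm_two]; norm_num
lemma gm_six : gm 6 = 15 := by rw [show 6 = 4 + 2 from rfl, gm_rec, gm_four]; norm_num
lemma gm_eight : gm 8 = 105 := by rw [show 8 = 6 + 2 from rfl, gm_rec, gm_six]; norm_num

lemma gm_odd {n : ℕ} (hn : Odd n) : gm n = 0 := by
  have hmap : (gaussianReal 0 1).map (fun x => -x) = gaussianReal 0 1 := by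
    have := gaussianReal_map_const_mul (μ := 0) (v := 1) (-1)
    simp only [neg_mul, one_mul, mul_zero] at this
    have hv : (⟨(-1:ℝ)^2, sq_nonneg _⟩ : ℝ≥0) * 1 = 1 := by ext; norm_num
    simpa [hv] using this
  have h1 : gm n = ∫ x : ℝ, (-x) ^ n ∂(gaussianReal 0 1) := by
    conv_lhs => rw [gm, ← hmap]
    rw [integral_map (by fun_prop) (by fun_prop)]
  have h2 : ∫ x : ℝ, (-x) ^ n ∂(gaussianReal 0 1) = -gm n := by
    simp only [hn.neg_pow]
    simp [gm, integral_neg]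
  have := h1.trans h2
  linarith

lemma monomial_integral (p : ℕ) (e : Fin p → ℕ) :
    ∫ x : Fin p → ℝ, ∏ i, (x i) ^ (e i) ∂(Measure.pi fun _ => gaussianReal 0 1)
    = ∏ i, gm (e i) := by
  letI : MeasureSpace ℝ := ⟨gaussianReal 0 1⟩
  letI : SigmaFinite (volume : Measure ℝ) := inferInstanceAs (SigmaFinite (gaussianReal 0 1))
  exact MeasureTheory.integral_fintype_prod_eq_prod (𝕜 := ℝ) (ι := Fin p)
    (fun i (t : ℝ) => t ^ (e i))

lemma monomial_integrable (p : ℕ) (e : Fin p → ℕ) :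
    Integrable (fun x : Fin p → ℝ => ∏ i, (x i) ^ (e i))
      (Measure.pi fun _ => gaussianReal 0 1) := by
  letI : MeasureSpace ℝ := ⟨gaussianReal 0 1⟩
  letI : SigmaFinite (volume : Measure ℝ) := inferInstanceAs (SigmaFinite (gaussianReal 0 1))
  exact MeasureTheory.Integrable.fintype_prod (f := fun i (t : ℝ) => t ^ (e i))
    (fun i => gm_integrable (e i))

def ee (p : ℕ) (a b j k l m : Fin p) : Fin p → ℕ := fun i =>
  (if i = a then 2 else 0) + (if i = b then 2 else 0) + (if i = j then 1 else 0)
    + (if i = k then 1 else 0) + (if i = l then 1 else 0) + (if i = m then 1 else 0)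

lemma prod_gm_restrict (p : ℕ) (E : Fin p → ℕ) (s : Finset (Fin p))
    (h : ∀ i, i ∉ s → E i = 0) : ∏ i, gm (E i) = ∏ i ∈ s, gm (E i) := by
  refine (Finset.prod_subset (Finset.subset_univ s) ?_).symm
  intro i _ hi
  rw [h i hi, gm_zero]

lemma two_le {p : ℕ} {u v : Fin p} (h : v ≠ u) : 2 ≤ p := by
  have h1 : ({v, u} : Finset (Fin p)).card = 2 := by
    rw [Finset.card_insert_of_notMem (by simp [h]), Finset.card_singleton]
  calc 2 = ({v, u} : Finset (Fin p)).card := h1.symm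
    _ ≤ (Finset.univ : Finset (Fin p)).card := Finset.card_le_univ _
    _ = p := by simp

lemma three_le {p : ℕ} {u v w : Fin p} (h1 : w ≠ v) (h2 : w ≠ u) (h3 : v ≠ u) : 3 ≤ p := by
  have hc : ({w, v, u} : Finset (Fin p)).card = 3 := by
    rw [Finset.card_insert_of_notMem (by simp [h1, h2]),
      Finset.card_insert_of_notMem (by simp [h3]), Finset.card_singleton]
  calc 3 = ({w, v, u} : Finset (Fin p)).card := hc.symm
    _ ≤ (Finset.univ : Finset (Fin p)).card := Finset.card_le_univ _
    _ = p := by simp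

lemma sum_const_erase1 {p : ℕ} (c : ℝ) (u : Fin p) :
    ∑ _x ∈ Finset.univ.erase u, c = ((p:ℝ) - 1) * c := by
  rw [Finset.sum_const, nsmul_eq_mul, Finset.card_erase_of_mem (Finset.mem_univ u)]
  rw [Finset.card_univ, Fintype.card_fin, Nat.cast_sub u.pos]
  push_cast; ring

lemma sum_const_erase2 {p : ℕ} (c : ℝ) (u v : Fin p) (h : v ≠ u) :
    ∑ _x ∈ (Finset.univ.erase u).erase v, c = ((p:ℝ) - 2) * c := by
  rw [Finset.sum_const, nsmul_eq_mul,
    Finset.card_erase_of_mem (Finset.mem_erase.2 ⟨h, Finset.mem_univ v⟩),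
    Finset.card_erase_of_mem (Finset.mem_univ u), Finset.card_univ, Fintype.card_fin]
  rw [show p - 1 - 1 = p - 2 from rfl, Nat.cast_sub (two_le h)]
  push_cast; ring

lemma sum_const_erase3 {p : ℕ} (c : ℝ) (u v w : Fin p) (h1 : w ≠ v) (h2 : w ≠ u)
    (h3 : v ≠ u) :
    ∑ _x ∈ ((Finset.univ.erase u).erase v).erase w, c = ((p:ℝ) - 3) * c := by
  rw [Finset.sum_const, nsmul_eq_mul,
    Finset.card_erase_of_mem (Finset.mem_erase.2 ⟨h1,
      Finset.mem_erase.2 ⟨h2, Finset.mem_univ w⟩⟩),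
    Finset.card_erase_of_mem (Finset.mem_erase.2 ⟨h3, Finset.mem_univ v⟩),
    Finset.card_erase_of_mem (Finset.mem_univ u), Finset.card_univ, Fintype.card_fin]
  rw [show p - 1 - 1 - 1 = p - 3 from rfl, Nat.cast_sub (three_le h1 h2 h3)]
  push_cast; ring

lemma sumP1 (p : ℕ) (u : Fin p) :
    ∑ a, ∑ b, ∏ i, gm (ee p a b u u u u i) = 3*((p:ℝ)+4)*((p:ℝ)+6) := by
  have hp1 : (1:ℝ) ≤ (p:ℝ) := by exact_mod_cast u.pos
  rw [← Finset.add_sum_erase _ _ (Finset.mem_univ u)]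
  have hbu : ∑ b, ∏ i, gm (ee p u b u u u u i) = 105 + ((p:ℝ)-1) * 15 := by
    rw [← Finset.add_sum_erase _ _ (Finset.mem_univ u)]
    have h1 : ∏ i, gm (ee p u u u u u u i) = 105 := by
      rw [prod_gm_restrict p _ {u} (by intro i hi; simp only [Finset.mem_singleton] at hi; simp [ee, hi])]
      rw [Finset.prod_singleton]
      simp [ee, gm_eight]
    have h2 : ∀ b ∈ Finset.univ.erase u, ∏ i, gm (ee p u b u u u u i) = 15 := by
      intro b hb
      have hbne : b ≠ u := (Finset.mem_erase.1 hb).1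
      rw [prod_gm_restrict p _ {u, b} (by
        intro i hi; simp only [Finset.mem_insert, Finset.mem_singleton, not_or] at hi
        simp [ee, hi.1, hi.2])]
      rw [Finset.prod_insert (by simp [hbne.symm]), Finset.prod_singleton]
      simp [ee, hbne, hbne.symm, gm_six, gm_two]
    rw [Finset.sum_congr rfl h2, sum_const_erase1, h1]
  have hano : ∀ a ∈ Finset.univ.erase u, ∑ b, ∏ i, gm (ee p a b u u u u i)
      = 24 + ((p:ℝ)-2) * 3 := by
    intro a ha
    have hane : a ≠ u := (Finset.mem_erase.1 ha).1
    rw [← Finset.add_sum_erase _ _ (Finset.mem_univ u),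
      ← Finset.add_sum_erase _ _ (Finset.mem_erase.2 ⟨hane, Finset.mem_univ a⟩)]
    have h1 : ∏ i, gm (ee p a u u u u u i) = 15 := by
      rw [prod_gm_restrict p _ {u, a} (by
        intro i hi; simp only [Finset.mem_insert, Finset.mem_singleton, not_or] at hi
        simp [ee, hi.1, hi.2])]
      rw [Finset.prod_insert (by simp [hane.symm]), Finset.prod_singleton]
      simp [ee, hane, hane.symm, gm_six, gm_two]
    have h2 : ∏ i, gm (ee p a a u u u u i) = 9 := by
      rw [prod_gm_restrict p _ {u, a} (by
        intro i hi; simp only [Finset.mem_insert, Finset.mem_singleton, not_or] at hi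
        simp [ee, hi.1, hi.2])]
      rw [Finset.prod_insert (by simp [hane.symm]), Finset.prod_singleton]
      simp [ee, hane, hane.symm, gm_four]
      norm_num
    have h3 : ∀ b ∈ (Finset.univ.erase u).erase a, ∏ i, gm (ee p a b u u u u i) = 3 := by
      intro b hb
      have hba : b ≠ a := (Finset.mem_erase.1 hb).1
      have hbu : b ≠ u := (Finset.mem_erase.1 (Finset.mem_erase.1 hb).2).1
      rw [prod_gm_restrict p _ {u, a, b} (by
        intro i hi
        simp only [Finset.mem_insert, Finset.mem_singleton, not_or] at hi
        simp [ee, hi.1, hi.2.1, hi.2.2])]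
      rw [Finset.prod_insert (by simp [hane.symm, hbu.symm]),
        Finset.prod_insert (by simp [hba.symm]), Finset.prod_singleton]
      simp [ee, hane, hane.symm, hba, hba.symm, hbu, hbu.symm, gm_four, gm_two]
    rw [Finset.sum_congr rfl h3, sum_const_erase2 _ _ _ hane, h1, h2]
    ring
  rw [Finset.sum_congr rfl hano, sum_const_erase1, hbu]
  ring

lemma sumP2 (p : ℕ) (u v : Fin p) (huv : u ≠ v) :
    ∑ a, ∑ b, ∏ i, gm (ee p a b u u v v i) = ((p:ℝ)+4)*((p:ℝ)+6) := by
  have hvu : v ≠ u := huv.symm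
  rw [← Finset.add_sum_erase _ _ (Finset.mem_univ u),
    ← Finset.add_sum_erase _ _ (Finset.mem_erase.2 ⟨hvu, Finset.mem_univ v⟩)]
  -- inner sum for a = u
  have hXu : ∑ b, ∏ i, gm (ee p u b u u v v i) = 24 + ((p:ℝ)-2) * 3 := by
    rw [← Finset.add_sum_erase _ _ (Finset.mem_univ u),
      ← Finset.add_sum_erase _ _ (Finset.mem_erase.2 ⟨hvu, Finset.mem_univ v⟩)]
    have h1 : ∏ i, gm (ee p u u u u v v i) = 15 := by
      rw [prod_gm_restrict p _ {u, v} (by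
        intro i hi; simp only [Finset.mem_insert, Finset.mem_singleton, not_or] at hi
        simp [ee, hi.1, hi.2])]
      rw [Finset.prod_insert (by simp [huv]), Finset.prod_singleton]
      simp [ee, huv, hvu, gm_six, gm_two]
    have h2 : ∏ i, gm (ee p u v u u v v i) = 9 := by
      rw [prod_gm_restrict p _ {u, v} (by
        intro i hi; simp only [Finset.mem_insert, Finset.mem_singleton, not_or] at hi
        simp [ee, hi.1, hi.2])]
      rw [Finset.prod_insert (by simp [huv]), Finset.prod_singleton]
      simp [ee, huv, hvu, gm_four]
      norm_num
    have h3 : ∀ b ∈ (Finset.univ.erase u).erase v, ∏ i, gm (ee p u b u u v v i) = 3 := by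
      intro b hb
      have hbv : b ≠ v := (Finset.mem_erase.1 hb).1
      have hbu : b ≠ u := (Finset.mem_erase.1 (Finset.mem_erase.1 hb).2).1
      rw [prod_gm_restrict p _ {u, v, b} (by
        intro i hi; simp only [Finset.mem_insert, Finset.mem_singleton, not_or] at hi
        simp [ee, hi.1, hi.2.1, hi.2.2])]
      rw [Finset.prod_insert (by simp [huv, hbu.symm]),
        Finset.prod_insert (by simp [hbv.symm]), Finset.prod_singleton]
      simp [ee, huv, hvu, hbu, hbu.symm, hbv, hbv.symm, gm_four, gm_two]
    rw [Finset.sum_congr rfl h3, sum_const_erase2 _ _ _ hvu, h1, h2]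
    ring
  -- inner sum for a = v
  have hXv : ∑ b, ∏ i, gm (ee p v b u u v v i) = 24 + ((p:ℝ)-2) * 3 := by
    rw [← Finset.add_sum_erase _ _ (Finset.mem_univ u),
      ← Finset.add_sum_erase _ _ (Finset.mem_erase.2 ⟨hvu, Finset.mem_univ v⟩)]
    have h1 : ∏ i, gm (ee p v u u u v v i) = 9 := by
      rw [prod_gm_restrict p _ {u, v} (by
        intro i hi; simp only [Finset.mem_insert, Finset.mem_singleton, not_or] at hi
        simp [ee, hi.1, hi.2])]
      rw [Finset.prod_insert (by simp [huv]), Finset.prod_singleton]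
      simp [ee, huv, hvu, gm_four]
      norm_num
    have h2 : ∏ i, gm (ee p v v u u v v i) = 15 := by
      rw [prod_gm_restrict p _ {u, v} (by
        intro i hi; simp only [Finset.mem_insert, Finset.mem_singleton, not_or] at hi
        simp [ee, hi.1, hi.2])]
      rw [Finset.prod_insert (by simp [huv]), Finset.prod_singleton]
      simp [ee, huv, hvu, gm_six, gm_two]
    have h3 : ∀ b ∈ (Finset.univ.erase u).erase v, ∏ i, gm (ee p v b u u v v i) = 3 := by
      intro b hb
      have hbv : b ≠ v := (Finset.mem_erase.1 hb).1
      have hbu : b ≠ u := (Finset.mem_erase.1 (Finset.mem_erase.1 hb).2).1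
      rw [prod_gm_restrict p _ {u, v, b} (by
        intro i hi; simp only [Finset.mem_insert, Finset.mem_singleton, not_or] at hi
        simp [ee, hi.1, hi.2.1, hi.2.2])]
      rw [Finset.prod_insert (by simp [huv, hbu.symm]),
        Finset.prod_insert (by simp [hbv.symm]), Finset.prod_singleton]
      simp [ee, huv, hvu, hbu, hbu.symm, hbv, hbv.symm, gm_four, gm_two]
    rw [Finset.sum_congr rfl h3, sum_const_erase2 _ _ _ hvu, h1, h2]
    ring
  -- inner sum for a ∉ {u, v}
  have hXa : ∀ a ∈ (Finset.univ.erase u).erase v, ∑ b, ∏ i, gm (ee p a b u u v v i)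
      = 9 + ((p:ℝ)-3) * 1 := by
    intro a ha
    have hav : a ≠ v := (Finset.mem_erase.1 ha).1
    have hau : a ≠ u := (Finset.mem_erase.1 (Finset.mem_erase.1 ha).2).1
    rw [← Finset.add_sum_erase _ _ (Finset.mem_univ u),
      ← Finset.add_sum_erase _ _ (Finset.mem_erase.2 ⟨hvu, Finset.mem_univ v⟩),
      ← Finset.add_sum_erase _ _ (Finset.mem_erase.2 ⟨hav,
        Finset.mem_erase.2 ⟨hau, Finset.mem_univ a⟩⟩)]
    have h1 : ∏ i, gm (ee p a u u u v v i) = 3 := by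
      rw [prod_gm_restrict p _ {u, v, a} (by
        intro i hi; simp only [Finset.mem_insert, Finset.mem_singleton, not_or] at hi
        simp [ee, hi.1, hi.2.1, hi.2.2])]
      rw [Finset.prod_insert (by simp [huv, hau.symm]),
        Finset.prod_insert (by simp [hav.symm]), Finset.prod_singleton]
      simp [ee, huv, hvu, hau, hau.symm, hav, hav.symm, gm_four, gm_two]
    have h2 : ∏ i, gm (ee p a v u u v v i) = 3 := by
      rw [prod_gm_restrict p _ {u, v, a} (by
        intro i hi; simp only [Finset.mem_insert, Finset.mem_singleton, not_or] at hi
        simp [ee, hi.1, hi.2.1, hi.2.2])]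
      rw [Finset.prod_insert (by simp [huv, hau.symm]),
        Finset.prod_insert (by simp [hav.symm]), Finset.prod_singleton]
      simp [ee, huv, hvu, hau, hau.symm, hav, hav.symm, gm_four, gm_two]
    have h3 : ∏ i, gm (ee p a a u u v v i) = 3 := by
      rw [prod_gm_restrict p _ {u, v, a} (by
        intro i hi; simp only [Finset.mem_insert, Finset.mem_singleton, not_or] at hi
        simp [ee, hi.1, hi.2.1, hi.2.2])]
      rw [Finset.prod_insert (by simp [huv, hau.symm]),
        Finset.prod_insert (by simp [hav.symm]), Finset.prod_singleton]
      simp [ee, huv, hvu, hau, hau.symm, hav, hav.symm, gm_four, gm_two]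
    have h4 : ∀ b ∈ (((Finset.univ.erase u).erase v).erase a),
        ∏ i, gm (ee p a b u u v v i) = 1 := by
      intro b hb
      have hba : b ≠ a := (Finset.mem_erase.1 hb).1
      have hbv : b ≠ v := (Finset.mem_erase.1 (Finset.mem_erase.1 hb).2).1
      have hbu : b ≠ u := (Finset.mem_erase.1 (Finset.mem_erase.1 (Finset.mem_erase.1 hb).2).2).1
      rw [prod_gm_restrict p _ {u, v, a, b} (by
        intro i hi; simp only [Finset.mem_insert, Finset.mem_singleton, not_or] at hi
        simp [ee, hi.1, hi.2.1, hi.2.2.1, hi.2.2.2])]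
      rw [Finset.prod_insert (by simp [huv, hau.symm, hbu.symm]),
        Finset.prod_insert (by simp [hav.symm, hbv.symm]),
        Finset.prod_insert (by simp [hba.symm]), Finset.prod_singleton]
      simp [ee, huv, hvu, hau, hau.symm, hav, hav.symm, hba, hba.symm, hbu, hbu.symm,
        hbv, hbv.symm, gm_four, gm_two]
    rw [Finset.sum_congr rfl h4, sum_const_erase3 _ _ _ _ hav hau hvu, h1, h2, h3]
    ring
  rw [Finset.sum_congr rfl hXa, sum_const_erase2 _ _ _ hvu, hXu, hXv]
  ring

lemma sum_zero (p : ℕ) (j k l m w : Fin p)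
    (hodd : ¬ (2 ∣ ((if w = j then 1 else 0) + (if w = k then 1 else 0)
      + (if w = l then 1 else 0) + (if w = m then 1 else 0) : ℕ))) :
    ∑ a, ∑ b, ∏ i, gm (ee p a b j k l m i) = 0 := by
  refine Finset.sum_eq_zero fun a _ => Finset.sum_eq_zero fun b _ => ?_
  apply Finset.prod_eq_zero (Finset.mem_univ w)
  apply gm_odd
  rw [Nat.odd_iff, Nat.two_dvd_ne_zero.symm] at *
  simp only [ee]
  set i1 : ℕ := if w = a then 2 else 0 with hi1
  set i2 : ℕ := if w = b then 2 else 0 with hi2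
  have e1 : i1 % 2 = 0 := by rw [hi1]; split_ifs <;> rfl
  have e2 : i2 % 2 = 0 := by rw [hi2]; split_ifs <;> rfl
  omega

lemma ee_eq₁ (p : ℕ) (a b u v : Fin p) : ee p a b u v u v = ee p a b u u v v := by
  funext i; simp only [ee]; omega

lemma ee_eq₂ (p : ℕ) (a b u v : Fin p) : ee p a b u v v u = ee p a b u u v v := by
  funext i; simp only [ee]; omega

lemma Tlem (p : ℕ) (j k l m : Fin p) :
    ∑ a, ∑ b, ∏ i, gm (ee p a b j k l m i)
    = ((p:ℝ)+4)*((p:ℝ)+6) * ((if j = k then (1:ℝ) else 0)*(if l = m then (1:ℝ) else 0)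
       + (if j = l then (1:ℝ) else 0)*(if k = m then (1:ℝ) else 0)
       + (if j = m then (1:ℝ) else 0)*(if k = l then (1:ℝ) else 0)) := by
  by_cases hjk : j = k
  · subst hjk
    by_cases hlm : l = m
    · subst hlm
      by_cases hjl : j = l
      · subst hjl
        rw [sumP1]
        norm_num
        ring
      · rw [sumP2 p j l hjl]
        simp [hjl]
    · rw [sum_zero p j j l m l (by simp [hlm, Ne.symm]; omega)]
      rcases eq_or_ne j l with h1 | h1
      · subst h1
        have h2 : j ≠ m := fun h => hlm (h ▸ rfl)
        simp [hlm, h2]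
      · simp [hlm, Ne.symm h1, h1]
  · by_cases hlm : l = m
    · subst hlm
      rw [sum_zero p j k l l j (by simp [hjk]; omega)]
      rcases eq_or_ne j l with h1 | h1
      · subst h1
        have h2 : k ≠ j := Ne.symm hjk
        simp [hjk, h2]
      · simp [hjk, h1]
    · by_cases hjl : j = l
      · subst hjl
        by_cases hkm : k = m
        · subst hkm
          simp only [ee_eq₁]
          rw [sumP2 p j k hjk]
          simp [hjk, Ne.symm hjk, hlm]
        · rw [sum_zero p j k j m k (by simp [Ne.symm hjk, hkm])]
          simp [hjk, hkm, hlm]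
      · by_cases hjm : j = m
        · subst hjm
          by_cases hkl : k = l
          · subst hkl
            simp only [ee_eq₂]
            rw [sumP2 p j k hjk]
            simp [hjk, Ne.symm hjk, hlm, hjl]
          · rw [sum_zero p j k l j k (by simp [hkl, Ne.symm hjk])]
            simp [hjk, hjl, hkl, hlm]
        · rw [sum_zero p j k l m j (by simp [hjk, hjl, hjm])]
          simp [hjk, hjl, hjm]

open Matrix in
lemma master (p : ℕ) (M : Matrix (Fin p) (Fin p) ℝ) :
    ∑ j, ∑ k, ∑ l, ∑ m, ∑ a, ∑ b : Fin p,
        (M j k * M l m) * (∏ i, gm (ee p a b j k l m i))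
    = ((p:ℝ) + 4) * ((p:ℝ) + 6) *
      (M.trace ^ 2 + (M * M).trace + (Mᵀ * M).trace) := by
  have h1 : ∀ j k l m : Fin p, ∑ a, ∑ b : Fin p,
      (M j k * M l m) * (∏ i, gm (ee p a b j k l m i))
      = (M j k * M l m) * ∑ a, ∑ b : Fin p, ∏ i, gm (ee p a b j k l m i) := by
    intro j k l m
    simp only [← Finset.mul_sum]
  simp only [h1, Tlem]
  have h2 : ∀ j k l m : Fin p,
      (M j k * M l m) * (((p:ℝ)+4)*((p:ℝ)+6) * ((if j = k then (1:ℝ) else 0)*(if l = m then (1:ℝ) else 0)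
       + (if j = l then (1:ℝ) else 0)*(if k = m then (1:ℝ) else 0)
       + (if j = m then (1:ℝ) else 0)*(if k = l then (1:ℝ) else 0)))
      = ((p:ℝ)+4)*((p:ℝ)+6) * ((if j = k then (1:ℝ) else 0)*(if l = m then (1:ℝ) else 0) * (M j k * M l m)
        + (if j = m then (1:ℝ) else 0)*(if k = l then (1:ℝ) else 0) * (M j k * M l m)
        + (if j = l then (1:ℝ) else 0)*(if k = m then (1:ℝ) else 0) * (M j k * M l m)) := by
    intro j k l m; ring
  simp only [h2, ← Finset.mul_sum]
  congr 1
  simp only [mul_add, Finset.sum_add_distrib]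
  congr 1
  · congr 1
    · -- trace squared term
      simp only [ite_mul, zero_mul, one_mul, mul_ite, mul_zero]
      simp only [Finset.sum_ite_eq, Finset.sum_ite_eq', Finset.mem_univ, if_true]
      rw [Matrix.trace, sq, Finset.sum_mul_sum]
      simp [Matrix.diag]
    · -- j=m,k=l term: ∑ M j k * M k j = (M*M).trace
      simp only [ite_mul, zero_mul, one_mul, mul_ite, mul_zero]
      simp [Finset.sum_ite_eq, Finset.sum_ite_eq', Matrix.trace, Matrix.diag, Matrix.mul_apply]
  · -- (Mᵀ M) ... j=l,k=m term: ∑ M j k * M j k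
    simp only [ite_mul, zero_mul, one_mul, mul_ite, mul_zero]
    simp only [Finset.sum_ite_eq, Finset.sum_ite_eq', Finset.mem_univ, if_true]
    rw [Matrix.trace]
    simp only [Matrix.diag, Matrix.mul_apply, Matrix.transpose_apply]
    rw [Finset.sum_comm]

lemma prod_pow_if {p : ℕ} (x : Fin p → ℝ) (u : Fin p) (n : ℕ) :
    (∏ i, x i ^ (if i = u then n else 0)) = x u ^ n := by
  rw [Finset.prod_congr rfl (fun i _ => show x i ^ (if i = u then n else 0)
    = if i = u then x i ^ n else 1 by split_ifs <;> simp)]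
  simp [Finset.prod_ite_eq']

lemma mon {p : ℕ} (x : Fin p → ℝ) (a b j k l m : Fin p) :
    ∏ i, x i ^ ee p a b j k l m i = x a ^ 2 * x b ^ 2 * x j * x k * x l * x m := by
  simp only [ee, pow_add, Finset.prod_mul_distrib, prod_pow_if, pow_one]

open Matrix in
lemma key (p : ℕ) (M : Matrix (Fin p) (Fin p) ℝ) (x : Fin p → ℝ) :
    (∑ i, x i ^ 2) ^ 2 * (x ⬝ᵥ M.mulVec x) ^ 2
    = ∑ j, ∑ k, ∑ l, ∑ m, ∑ a, ∑ b : Fin p,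
        (M j l * M k m) * ∏ i, x i ^ ee p a b j l k m i := by
  have hQ : x ⬝ᵥ M.mulVec x = ∑ j, ∑ k, M j k * (x j * x k) := by
    simp only [dotProduct, Matrix.mulVec, Finset.mul_sum]
    exact Finset.sum_congr rfl fun j _ => Finset.sum_congr rfl fun k _ => by ring
  rw [hQ]
  have e1 : (∑ i, x i ^ 2) ^ 2 = ∑ a, ∑ b : Fin p, x a ^ 2 * x b ^ 2 := by
    rw [sq, Finset.sum_mul_sum]
  have e2 : (∑ j, ∑ k, M j k * (x j * x k)) ^ 2
      = ∑ j, ∑ l, ∑ k, ∑ m : Fin p, (M j k * (x j * x k)) * (M l m * (x l * x m)) := by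
    rw [sq, Finset.sum_mul_sum]
    exact Finset.sum_congr rfl fun j _ => Finset.sum_congr rfl fun l _ =>
      Finset.sum_mul_sum _ _ _ _
  rw [e1, e2]
  rw [Finset.sum_mul_sum]
  simp only [Finset.sum_mul, Finset.mul_sum]
  rw [Finset.sum_comm]
  refine Finset.sum_congr rfl fun j _ => ?_
  rw [Finset.sum_comm]
  refine Finset.sum_congr rfl fun k _ => ?_
  rw [Finset.sum_comm]
  refine Finset.sum_congr rfl fun l _ => ?_
  rw [Finset.sum_comm]
  refine Finset.sum_congr rfl fun m _ => ?_
  refine Finset.sum_congr rfl fun a _ => Finset.sum_congr rfl fun b _ => ?_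
  rw [mon]
  ring

open Matrix in
theorem statement4 (p : ℕ) (M : Matrix (Fin p) (Fin p) ℝ) :
    ∫ x : Fin p → ℝ, (∑ i, x i ^ 2) ^ 2 * (x ⬝ᵥ M.mulVec x) ^ 2
      ∂(Measure.pi fun _ : Fin p => gaussianReal 0 1)
    = ((p : ℝ) + 4) * ((p : ℝ) + 6) *
      (M.trace ^ 2 + (M * M).trace + (Mᵀ * M).trace) := by
  have hflat : ∀ x : Fin p → ℝ, (∑ i, x i ^ 2) ^ 2 * (x ⬝ᵥ M.mulVec x) ^ 2
      = ∑ z : Fin p × Fin p × Fin p × Fin p × Fin p × Fin p,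
        (M z.1 z.2.2.1 * M z.2.1 z.2.2.2.1) *
          ∏ i, x i ^ ee p z.2.2.2.2.1 z.2.2.2.2.2 z.1 z.2.2.1 z.2.1 z.2.2.2.1 i := by
    intro x
    rw [key p M x]
    simp only [Fintype.sum_prod_type]
  calc ∫ x : Fin p → ℝ, (∑ i, x i ^ 2) ^ 2 * (x ⬝ᵥ M.mulVec x) ^ 2
        ∂(Measure.pi fun _ : Fin p => gaussianReal 0 1)
      = ∫ x : Fin p → ℝ, (∑ z : Fin p × Fin p × Fin p × Fin p × Fin p × Fin p,
          (M z.1 z.2.2.1 * M z.2.1 z.2.2.2.1) *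
            ∏ i, x i ^ ee p z.2.2.2.2.1 z.2.2.2.2.2 z.1 z.2.2.1 z.2.1 z.2.2.2.1 i)
          ∂(Measure.pi fun _ : Fin p => gaussianReal 0 1) := by
        exact integral_congr_ae (Filter.Eventually.of_forall hflat)
    _ = ∑ z : Fin p × Fin p × Fin p × Fin p × Fin p × Fin p,
          (M z.1 z.2.2.1 * M z.2.1 z.2.2.2.1) *
            ∏ i, gm (ee p z.2.2.2.2.1 z.2.2.2.2.2 z.1 z.2.2.1 z.2.1 z.2.2.2.1 i) := by
        rw [integral_finset_sum _ (fun z _ => (monomial_integrable p _).const_mul _)]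
        exact Finset.sum_congr rfl fun z _ => by
          rw [integral_const_mul, monomial_integral]
    _ = ∑ j, ∑ k, ∑ l, ∑ m, ∑ a, ∑ b : Fin p,
          (M j l * M k m) * (∏ i, gm (ee p a b j l k m i)) := by
        simp only [Fintype.sum_prod_type]
    _ = ∑ j, ∑ k, ∑ l, ∑ m, ∑ a, ∑ b : Fin p,
          (M j k * M l m) * (∏ i, gm (ee p a b j k l m i)) := by
        exact Finset.sum_congr rfl fun j _ => Finset.sum_comm
    _ = ((p : ℝ) + 4) * ((p : ℝ) + 6) *
        (M.trace ^ 2 + (M * M).trace + (Mᵀ * M).trace) := master p M
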